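/- Let G be a graph containing two distinct cycles C and C' whose intersection contains at least two distinct vertices. Then either G contains K_{2,3} as a minor, or G contains two distinct cycles D and D' whose intersection consists of exactly one edge together with its two endpoints. -/

import Mathlib

/-- `H` is a minor of `G`: there is an assignment of pairwise disjoint, connected,
nonempty branch sets in `G` to the vertices of `H`, with an edge of `G` between the
branch sets of any two adjacent vertices of `H`. -/
def SimpleGraph.IsMinorOf {W V : Type*} (H : SimpleGraph W) (G : SimpleGraph V) : Prop :=
  ∃ φ : W → Set V,
    (∀ w, (G.induce (φ w)).Connected) ∧
    (Pairwise fun w w' => Disjoint (φ w) (φ w')) ∧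
    ∀ ⦃w w'⦄, H.Adj w w' → ∃ a ∈ φ w, ∃ b ∈ φ w', G.Adj a b

open SimpleGraph Walk

namespace K23Aux

variable {V : Type*} [DecidableEq V] {G : SimpleGraph V}

lemma end_mem_support_tail {a b : V} (R : G.Walk a b) (h : b ≠ a) : b ∈ R.support.tail := by
  cases R with
  | nil => exact absurd rfl h
  | cons h q => simpa using q.end_mem_support

lemma end_mem_support_tail' {a : V} (R : G.Walk a a) (h : ¬ R.Nil) : a ∈ R.support.tail := by
  cases R with
  | nil => simp at h
  | cons h q => simpa using q.end_mem_support

lemma mem_support_iff_mem_tail {a : V} (R : G.Walk a a) (h : ¬ R.Nil) (v : V) :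
    v ∈ R.support ↔ v ∈ R.support.tail := by
  constructor
  · intro hv
    rw [R.support_eq_cons] at hv
    rcases List.mem_cons.mp hv with rfl | hv
    · exact end_mem_support_tail' R h
    · exact hv
  · intro hv
    rw [R.support_eq_cons]
    exact List.mem_cons_of_mem _ hv

lemma mem_support_rotate_iff {a b : V} (R : G.Walk a a) (hR : R.IsCycle) (hb : b ∈ R.support)
    (v : V) : v ∈ (R.rotate _ hb).support ↔ v ∈ R.support := by
  have h1 : ¬ R.Nil := by
    rw [Walk.nil_iff_length_eq, Walk.length_eq_zero_iff]
    exact fun h => hR.ne_nil (Walk.nil_iff_eq_nil.mp h)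
  have h2 : ¬ (R.rotate _ hb).Nil := by
    rw [Walk.nil_iff_length_eq, Walk.length_eq_zero_iff]
    exact fun h => (hR.rotate hb).ne_nil (Walk.nil_iff_eq_nil.mp h)
  rw [mem_support_iff_mem_tail _ h1, mem_support_iff_mem_tail _ h2]
  exact (R.support_rotate _ hb).perm.mem_iff

lemma mem_edges_rotate_iff {a b : V} (R : G.Walk a a) (hb : b ∈ R.support) (e : Sym2 V) :
    e ∈ (R.rotate _ hb).edges ↔ e ∈ R.edges :=
  (R.rotate_edges _ hb).perm.mem_iff
lemma exists_firstHit (S : Set V) :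
    ∀ {a b : V} (W : G.Walk a b), a ∉ S → (∃ v ∈ W.support, v ∈ S) →
    ∃ (x : V) (Q : G.Walk a x) (R : G.Walk x b), W = Q.append R ∧ x ∈ S ∧
      (∀ z ∈ Q.support, z ∈ S → z = x) := by
  intro a b W
  induction W with
  | nil =>
    intro ha ⟨v, hv, hvS⟩
    simp only [support_nil, List.mem_singleton] at hv
    exact absurd (hv ▸ hvS) ha
  | @cons a z b h q ih =>
    intro ha ⟨v, hv, hvS⟩
    by_cases hz : z ∈ S
    · refine ⟨z, Walk.cons h Walk.nil, q, by simp, hz, ?_⟩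
      intro w hw hwS
      simp only [support_cons, support_nil, List.mem_cons, List.mem_singleton] at hw
      rcases hw with rfl | rfl | h
      · exact absurd hwS ha
      · rfl
      · simp at h
    · have hvq : ∃ v ∈ q.support, v ∈ S := by
        simp only [support_cons, List.mem_cons] at hv
        rcases hv with rfl | hv
        · exact absurd hvS ha
        · exact ⟨v, hv, hvS⟩
      obtain ⟨x, Q, R, hqe, hxS, hQ⟩ := ih hz hvq
      refine ⟨x, Walk.cons h Q, R, by simp [hqe], hxS, ?_⟩
      intro w hw hwS
      simp only [support_cons, List.mem_cons] at hw
      rcases hw with rfl | hw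
      · exact absurd hwS ha
      · exact hQ w hw hwS

/-- close a path with an edge to get a cycle -/
lemma cycle_of_path_append_edge {a b : V} {Q : G.Walk a b} (hQ : Q.IsPath) (h : G.Adj b a)
    (he : s(b, a) ∉ Q.edges) : (Q.append (Walk.cons h Walk.nil)).IsCycle := by
  refine ⟨⟨⟨?_⟩, ?_⟩, ?_⟩
  · rw [edges_append, edges_cons, edges_nil, List.nodup_append']
    exact ⟨hQ.edges_nodup, List.nodup_singleton _, by simpa using he⟩
  · intro hnil
    have := congr_arg Walk.length hnil
    rw [Walk.length_append, Walk.length_cons, Walk.length_nil] at this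
    omega
  · have hsup : (Q.append (Walk.cons h Walk.nil)).support = Q.support ++ [a] := by
      rw [support_append, support_cons, support_nil]; rfl
    rw [hsup, Q.support_eq_cons, List.cons_append, List.tail_cons, List.nodup_append']
    have hnd := hQ.support_nodup
    rw [Q.support_eq_cons] at hnd
    refine ⟨(List.nodup_cons.mp hnd).2, List.nodup_singleton _, ?_⟩
    intro w hw
    simp only [List.mem_singleton]
    rintro rfl
    exact (List.nodup_cons.mp hnd).1 hw

lemma two_le_length {a b : V} (W : G.Walk a b) (hab : a ≠ b) (hnadj : ¬ G.Adj a b) :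
    2 ≤ W.length := by
  cases W with
  | nil => exact absurd rfl hab
  | cons h q =>
    cases q with
    | nil => exact absurd h hnadj
    | cons h' q' => simp only [length_cons]; omega

/-- decompose a walk of length ≥ 2 into first edge, middle, last edge -/
lemma path_decomp {a b : V} (Q : G.Walk a b) (hlen : 2 ≤ Q.length) :
    ∃ (z w : V) (haz : G.Adj a z) (hwb : G.Adj w b) (M : G.Walk z w),
      Q = Walk.cons haz (M.append (Walk.cons hwb Walk.nil)) := by
  cases Q with
  | nil => simp at hlen
  | @cons a z b h q =>
    have hq : ¬ q.Nil := by
      rw [Walk.nil_iff_length_eq]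
      simp only [length_cons] at hlen
      omega
    have hqr : ¬ q.reverse.Nil := by
      rw [Walk.nil_iff_length_eq, Walk.length_reverse]
      rw [Walk.nil_iff_length_eq] at hq
      exact hq
    obtain ⟨w, hadj, r, hqe⟩ := Walk.not_nil_iff.mp hqr
    refine ⟨z, w, h, hadj.symm, r.reverse, ?_⟩
    congr 1
    have : q = q.reverse.reverse := by simp
    rw [this, hqe, Walk.reverse_cons]

lemma singleton_induce_connected (x : V) : (G.induce {x}).Connected := by
  have h := (Walk.nil : G.Walk x x).connected_induce_support
  have : {v | v ∈ (Walk.nil : G.Walk x x).support} = ({x} : Set V) := by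
    ext v; simp
  rwa [this] at h
lemma exists_ear (S : Set V) {p : V} (d : G.Walk p p) (hd : d.IsCycle) (hp : p ∉ S)
    {v w : V} (hvw : v ≠ w) (hv : v ∈ d.support) (hvS : v ∈ S)
    (hw : w ∈ d.support) (hwS : w ∈ S) :
    ∃ (x y : V) (P : G.Walk x y), P.IsPath ∧ x ≠ y ∧ x ∈ S ∧ y ∈ S ∧
      (∀ z ∈ P.support, z ∈ S → z = x ∨ z = y) ∧ s(x, y) ∉ P.edges := by
  obtain ⟨x, Q1, R1, hdeq, hxS, hQ1S⟩ := exists_firstHit S d hp ⟨v, hv, hvS⟩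
  have hxp : x ≠ p := fun h => hp (h ▸ hxS)
  have hsupp : d.support = Q1.support ++ R1.support.tail := by rw [hdeq, support_append]
  have hQ1sup : Q1.support = p :: Q1.support.tail := Q1.support_eq_cons
  have htail : d.support.tail = Q1.support.tail ++ R1.support.tail := by
    rw [hsupp]
    conv_lhs => rw [hQ1sup, List.cons_append, List.tail_cons]
  have hnd : (Q1.support.tail ++ R1.support.tail).Nodup := htail ▸ hd.support_nodup
  obtain ⟨hσ1nd, htRnd, hdisj⟩ := List.nodup_append'.mp hnd
  have hx1 : x ∈ Q1.support.tail := end_mem_support_tail Q1 hxp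
  have hpR : p ∈ R1.support.tail := end_mem_support_tail R1 hxp.symm
  have hpσ1 : p ∉ Q1.support.tail := fun h => hdisj h hpR
  have hxtR : x ∉ R1.support.tail := hdisj hx1
  have hxrev : x ∈ R1.reverse.support := by
    rw [support_reverse, List.mem_reverse]; exact R1.start_mem_support
  obtain ⟨y, Q2, R2, hReq, hyS, hQ2S⟩ := exists_firstHit S R1.reverse hp ⟨x, hxrev, hxS⟩
  have hR1sup : R1.support = x :: R1.support.tail := R1.support_eq_cons
  have hR1nd : R1.reverse.support.Nodup := by
    rw [support_reverse, List.nodup_reverse, hR1sup]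
    exact List.nodup_cons.mpr ⟨hxtR, htRnd⟩
  have hrevsup : R1.reverse.support = Q2.support ++ R2.support.tail := by
    rw [hReq, support_append]
  obtain ⟨hQ2nd, hR2nd, hdisj2⟩ := List.nodup_append'.mp (hrevsup ▸ hR1nd)
  have hxy : x ≠ y := by
    intro hxyeq
    subst hxyeq
    have hxQ2 : x ∈ Q2.support := Q2.end_mem_support
    cases R2 with
    | cons h' q' =>
      exact hdisj2 hxQ2 (by simpa using q'.end_mem_support)
    | nil =>
      have hrevsup' : R1.reverse.support = Q2.support := by
        simpa using hrevsup
      obtain ⟨z, hzx, hz, hzS⟩ : ∃ z, z ≠ x ∧ z ∈ d.support ∧ z ∈ S := by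
        by_cases hvx : v = x
        · exact ⟨w, fun h => hvw (hvx ▸ h ▸ rfl), hw, hwS⟩
        · exact ⟨v, hvx, hv, hvS⟩
      rw [hsupp, List.mem_append] at hz
      rcases hz with hz | hz
      · exact hzx (hQ1S z hz hzS)
      · have : z ∈ R1.reverse.support := by
          rw [support_reverse, List.mem_reverse, hR1sup]
          exact List.mem_cons_of_mem _ hz
        rw [hrevsup'] at this
        exact hzx (hQ2S z this hzS)
  have hQ2sup : Q2.support = p :: Q2.support.tail := Q2.support_eq_cons
  have hpσ2 : p ∉ Q2.support.tail := by
    have := hQ2sup ▸ hQ2nd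
    exact (List.nodup_cons.mp this).1
  have hσ2nd : Q2.support.tail.Nodup := by
    have := hQ2sup ▸ hQ2nd
    exact (List.nodup_cons.mp this).2
  have hσ2sub : ∀ z ∈ Q2.support.tail, z ∈ R1.support.tail := by
    intro z hz
    have hzQ2 : z ∈ Q2.support := by rw [hQ2sup]; exact List.mem_cons_of_mem _ hz
    have hzrev : z ∈ R1.reverse.support := by
      rw [hrevsup]; exact List.mem_append_left _ hzQ2
    rw [support_reverse, List.mem_reverse, hR1sup, List.mem_cons] at hzrev
    rcases hzrev with rfl | hzrev
    · exact absurd (hQ2S z hzQ2 hxS) hxy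
    · exact hzrev
  refine ⟨x, y, Q1.reverse.append Q2, ?_, hxy, hxS, hyS, ?_, ?_⟩
  · apply Walk.IsPath.mk'
    have hPsup : (Q1.reverse.append Q2).support
        = (Q1.support.tail.reverse ++ [p]) ++ Q2.support.tail := by
      rw [support_append, support_reverse]
      conv_lhs => rw [hQ1sup, hQ2sup]
      rw [List.reverse_cons, List.tail_cons]
    rw [hPsup, List.nodup_append']
    refine ⟨?_, hσ2nd, ?_⟩
    · rw [List.nodup_append']
      refine ⟨List.nodup_reverse.mpr hσ1nd, List.nodup_singleton _, ?_⟩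
      intro z hz hz'
      rw [List.mem_reverse] at hz
      rw [List.mem_singleton] at hz'
      exact hpσ1 (hz' ▸ hz)
    · intro z hz hz2
      rw [List.mem_append] at hz
      rcases hz with hz | hz
      · rw [List.mem_reverse] at hz
        exact hdisj hz (hσ2sub z hz2)
      · rw [List.mem_singleton] at hz
        exact hpσ2 (hz ▸ hz2)
  · intro z hz hzS
    rw [mem_support_append_iff] at hz
    rcases hz with hz | hz
    · rw [support_reverse, List.mem_reverse] at hz
      exact Or.inl (hQ1S z hz hzS)
    · exact Or.inr (hQ2S z hz hzS)
  · intro he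
    rw [edges_append, List.mem_append] at he
    rcases he with he | he
    · rw [edges_reverse, List.mem_reverse] at he
      exact hxy (hQ1S y (Q1.snd_mem_support_of_mem_edges he) hyS).symm
    · exact hxy (hQ2S x (Q2.fst_mem_support_of_mem_edges he) hxS)

lemma cycle_split {x y : V} (c1 : G.Walk x x) (hc1 : c1.IsCycle) (hy : y ∈ c1.support)
    (hyx : y ≠ x) :
    ∃ (Q1 : G.Walk x y) (Q2 : G.Walk y x), c1 = Q1.append Q2 ∧ Q1.IsPath ∧ Q2.IsPath ∧
      (∀ z, z ∈ Q1.support → z ∈ Q2.support → z = x ∨ z = y) ∧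
      (∀ e ∈ Q1.edges, e ∉ Q2.edges) := by
  refine ⟨c1.takeUntil y hy, c1.dropUntil y hy, (c1.take_spec hy).symm, ?_⟩
  set Q1 := c1.takeUntil y hy with hQ1def
  set Q2 := c1.dropUntil y hy with hQ2def
  have hceq : c1 = Q1.append Q2 := (c1.take_spec hy).symm
  have hsupp : c1.support = Q1.support ++ Q2.support.tail := by rw [hceq, support_append]
  have hQ1sup : Q1.support = x :: Q1.support.tail := Q1.support_eq_cons
  have hQ2sup : Q2.support = y :: Q2.support.tail := Q2.support_eq_cons
  have htail : c1.support.tail = Q1.support.tail ++ Q2.support.tail := by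
    rw [hsupp]
    conv_lhs => rw [hQ1sup, List.cons_append, List.tail_cons]
  have hnd : (Q1.support.tail ++ Q2.support.tail).Nodup := htail ▸ hc1.support_nodup
  obtain ⟨hσ1nd, hσ2nd, hdisj⟩ := List.nodup_append'.mp hnd
  have hy1 : y ∈ Q1.support.tail := end_mem_support_tail Q1 hyx
  have hx2 : x ∈ Q2.support.tail := end_mem_support_tail Q2 (fun h => hyx h.symm)
  have hxσ1 : x ∉ Q1.support.tail := fun h => hdisj h hx2
  have hyσ2 : y ∉ Q2.support.tail := fun h => hdisj hy1 h
  have hedges : c1.edges = Q1.edges ++ Q2.edges := by rw [hceq, edges_append]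
  have hednd : (Q1.edges ++ Q2.edges).Nodup := hedges ▸ hc1.isTrail.edges_nodup 
  refine ⟨?_, ?_, ?_, ?_⟩
  · apply Walk.IsPath.mk'
    rw [hQ1sup]
    exact List.nodup_cons.mpr ⟨hxσ1, hσ1nd⟩
  · apply Walk.IsPath.mk'
    rw [hQ2sup]
    exact List.nodup_cons.mpr ⟨hyσ2, hσ2nd⟩
  · intro z hz1 hz2
    by_cases hzx : z = x
    · exact Or.inl hzx
    by_cases hzy : z = y
    · exact Or.inr hzy
    exfalso
    rw [hQ1sup, List.mem_cons] at hz1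
    rw [hQ2sup, List.mem_cons] at hz2
    rcases hz1 with rfl | hz1
    · exact hzx rfl
    rcases hz2 with rfl | hz2
    · exact hzy rfl
    exact hdisj hz1 hz2
  · intro e he1 he2
    exact (List.nodup_append'.mp hednd).2.2 he1 he2
lemma ear_package {u u' : V} (c : G.Walk u u) (c' : G.Walk u' u') (hc' : c'.IsCycle)
    {r : V} (hr : r ∉ c.support) (hrsup : r ∈ c'.support)
    {v w : V} (hvw : v ≠ w) (hvc : v ∈ c.support) (hvc' : v ∈ c'.support)
    (hwc : w ∈ c.support) (hwc' : w ∈ c'.support) :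
    ∃ (x y : V) (P : G.Walk x y), P.IsPath ∧ x ≠ y ∧ x ∈ c.support ∧ y ∈ c.support ∧
      (∀ z ∈ P.support, z ∈ c.support → z = x ∨ z = y) ∧ (∀ e ∈ P.edges, e ∉ c.edges) := by
  set S : Set V := {z | z ∈ c.support} with hS
  have hv' : v ∈ (c'.rotate _ hrsup).support := (mem_support_rotate_iff c' hc' hrsup v).mpr hvc'
  have hw' : w ∈ (c'.rotate _ hrsup).support := (mem_support_rotate_iff c' hc' hrsup w).mpr hwc'
  obtain ⟨x, y, P, hP, hxy, hxS, hyS, hPS, hsxy⟩ :=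
    exists_ear S (c'.rotate _ hrsup) (hc'.rotate hrsup) hr hvw hv' hvc hw' hwc
  refine ⟨x, y, P, hP, hxy, hxS, hyS, hPS, ?_⟩
  intro e heP heC
  revert heP heC
  induction e using Sym2.ind with
  | _ α β =>
    intro heP heC
    have hαβ : α ≠ β := (c.adj_of_mem_edges heC).ne
    have hα : α = x ∨ α = y := hPS α (P.fst_mem_support_of_mem_edges heP)
      (c.fst_mem_support_of_mem_edges heC)
    have hβ : β = x ∨ β = y := hPS β (P.snd_mem_support_of_mem_edges heP)
      (c.snd_mem_support_of_mem_edges heC)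
    rcases hα with rfl | rfl <;> rcases hβ with rfl | rfl
    · exact hαβ rfl
    · exact hsxy heP
    · rw [Sym2.eq_swap] at heP; exact hsxy heP
    · exact hαβ rfl
lemma k23_part {u : V} (c : G.Walk u u) {x y : V}
    {Q1 : G.Walk x y} {Q2 : G.Walk y x} {P : G.Walk x y}
    (hQ1 : Q1.IsPath) (hQ2 : Q2.IsPath) (hP : P.IsPath) (hxy : x ≠ y)
    (hQsup : ∀ z, z ∈ Q1.support → z ∈ Q2.support → z = x ∨ z = y)
    (hQ1c : ∀ z ∈ Q1.support, z ∈ c.support) (hQ2c : ∀ z ∈ Q2.support, z ∈ c.support)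
    (hPS : ∀ z ∈ P.support, z ∈ c.support → z = x ∨ z = y)
    (hnadj : ¬ G.Adj x y) :
    (completeBipartiteGraph (Fin 2) (Fin 3)).IsMinorOf G := by
  have h2Q1 : 2 ≤ Q1.length := two_le_length Q1 hxy hnadj
  have h2Q2 : 2 ≤ Q2.length := two_le_length Q2 (Ne.symm hxy) (fun h => hnadj h.symm)
  have h2P : 2 ≤ P.length := two_le_length P hxy hnadj
  obtain ⟨z1, w1, h1a, h1b, M1, hM1⟩ := path_decomp Q1 h2Q1
  obtain ⟨z2, w2, h2a, h2b, M2, hM2⟩ := path_decomp Q2 h2Q2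
  obtain ⟨z3, w3, h3a, h3b, M3, hM3⟩ := path_decomp P h2P
  have hs1 : Q1.support = x :: (M1.support ++ [y]) := by
    rw [hM1, support_cons, support_append, support_cons, support_nil, List.tail_cons]
  have hs2 : Q2.support = y :: (M2.support ++ [x]) := by
    rw [hM2, support_cons, support_append, support_cons, support_nil, List.tail_cons]
  have hs3 : P.support = x :: (M3.support ++ [y]) := by
    rw [hM3, support_cons, support_append, support_cons, support_nil, List.tail_cons]
  have hn1 := hQ1.support_nodup
  rw [hs1, List.nodup_cons, List.nodup_append'] at hn1
  have hn2 := hQ2.support_nodup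
  rw [hs2, List.nodup_cons, List.nodup_append'] at hn2
  have hn3 := hP.support_nodup
  rw [hs3, List.nodup_cons, List.nodup_append'] at hn3
  have hxM1 : x ∉ M1.support := fun h => hn1.1 (List.mem_append_left _ h)
  have hyM1 : y ∉ M1.support := fun h => hn1.2.2.2 h (List.mem_singleton_self _)
  have hyM2 : y ∉ M2.support := fun h => hn2.1 (List.mem_append_left _ h)
  have hxM2 : x ∉ M2.support := fun h => hn2.2.2.2 h (List.mem_singleton_self _)
  have hxM3 : x ∉ M3.support := fun h => hn3.1 (List.mem_append_left _ h)
  have hyM3 : y ∉ M3.support := fun h => hn3.2.2.2 h (List.mem_singleton_self _)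
  have hM1Q1 : ∀ z ∈ M1.support, z ∈ Q1.support := fun z h => by
    rw [hs1]; exact List.mem_cons_of_mem _ (List.mem_append_left _ h)
  have hM2Q2 : ∀ z ∈ M2.support, z ∈ Q2.support := fun z h => by
    rw [hs2]; exact List.mem_cons_of_mem _ (List.mem_append_left _ h)
  have hM3P : ∀ z ∈ M3.support, z ∈ P.support := fun z h => by
    rw [hs3]; exact List.mem_cons_of_mem _ (List.mem_append_left _ h)
  have d12 : ∀ z ∈ M1.support, z ∉ M2.support := by
    intro z h1 h2
    rcases hQsup z (hM1Q1 z h1) (hM2Q2 z h2) with rfl | rfl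
    · exact hxM1 h1
    · exact hyM1 h1
  have d13 : ∀ z ∈ M1.support, z ∉ M3.support := by
    intro z h1 h3
    rcases hPS z (hM3P z h3) (hQ1c z (hM1Q1 z h1)) with rfl | rfl
    · exact hxM1 h1
    · exact hyM1 h1
  have d23 : ∀ z ∈ M2.support, z ∉ M3.support := by
    intro z h2 h3
    rcases hPS z (hM3P z h3) (hQ2c z (hM2Q2 z h2)) with rfl | rfl
    · exact hxM2 h2
    · exact hyM2 h2
  have sd : ∀ (a : V) (l : List V), a ∉ l → Disjoint ({a} : Set V) {z | z ∈ l} := by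
    intro a l h
    rw [Set.disjoint_left]
    intro b hb hb2
    rw [Set.mem_singleton_iff] at hb
    exact h (hb ▸ hb2)
  have ld : ∀ (l1 l2 : List V), (∀ z ∈ l1, z ∉ l2) → Disjoint {z : V | z ∈ l1} {z | z ∈ l2} := by
    intro l1 l2 h
    rw [Set.disjoint_left]
    intro b hb hb2
    exact h b hb hb2
  refine ⟨Sum.elim (fun i => if i = 0 then {x} else {y})
      (fun j => if j = 0 then {z | z ∈ M1.support}
        else if j = 1 then {z | z ∈ M2.support} else {z | z ∈ M3.support}), ?_, ?_, ?_⟩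
  · rintro (i | j)
    · fin_cases i
      · exact singleton_induce_connected x
      · exact singleton_induce_connected y
    · fin_cases j
      · exact M1.connected_induce_support
      · exact M2.connected_induce_support
      · exact M3.connected_induce_support
  · rintro (i | j) (i' | j') hne
    · fin_cases i <;> fin_cases i' <;>
        first
          | exact absurd rfl hne
          | exact Set.disjoint_singleton.mpr hxy
          | exact Set.disjoint_singleton.mpr (Ne.symm hxy)
    · fin_cases i <;> fin_cases j' <;>
        first
          | exact sd _ _ hxM1 | exact sd _ _ hxM2 | exact sd _ _ hxM3
          | exact sd _ _ hyM1 | exact sd _ _ hyM2 | exact sd _ _ hyM3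
    · fin_cases i' <;> fin_cases j <;>
        first
          | exact (sd _ _ hxM1).symm | exact (sd _ _ hxM2).symm | exact (sd _ _ hxM3).symm
          | exact (sd _ _ hyM1).symm | exact (sd _ _ hyM2).symm | exact (sd _ _ hyM3).symm
    · fin_cases j <;> fin_cases j' <;>
        first
          | exact absurd rfl hne
          | exact ld _ _ d12 | exact ld _ _ d13 | exact ld _ _ d23
          | exact (ld _ _ d12).symm | exact (ld _ _ d13).symm | exact (ld _ _ d23).symm
  · rintro (i | j) (i' | j') hK
    · simp at hK
    · fin_cases i <;> fin_cases j'
      · exact ⟨x, rfl, z1, M1.start_mem_support, h1a⟩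
      · exact ⟨x, rfl, w2, M2.end_mem_support, h2b.symm⟩
      · exact ⟨x, rfl, z3, M3.start_mem_support, h3a⟩
      · exact ⟨y, rfl, w1, M1.end_mem_support, h1b.symm⟩
      · exact ⟨y, rfl, z2, M2.start_mem_support, h2a⟩
      · exact ⟨y, rfl, w3, M3.end_mem_support, h3b.symm⟩
    · fin_cases j <;> fin_cases i'
      · exact ⟨z1, M1.start_mem_support, x, rfl, h1a.symm⟩
      · exact ⟨w1, M1.end_mem_support, y, rfl, h1b⟩
      · exact ⟨w2, M2.end_mem_support, x, rfl, h2b⟩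
      · exact ⟨z2, M2.start_mem_support, y, rfl, h2a.symm⟩
      · exact ⟨z3, M3.start_mem_support, x, rfl, h3a.symm⟩
      · exact ⟨w3, M3.end_mem_support, y, rfl, h3b⟩
    · simp at hK
lemma main_con {u : V} (c : G.Walk u u) (hc : c.IsCycle) {x y : V} (P : G.Walk x y)
    (hP : P.IsPath) (hxy : x ≠ y) (hx : x ∈ c.support) (hy : y ∈ c.support)
    (hPS : ∀ z ∈ P.support, z ∈ c.support → z = x ∨ z = y)
    (hPE : ∀ e ∈ P.edges, e ∉ c.edges) :
    (completeBipartiteGraph (Fin 2) (Fin 3)).IsMinorOf G ∨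
    ∃ (x' y' : V) (d : G.Walk x' x') (d' : G.Walk y' y'),
      d.IsCycle ∧ d'.IsCycle ∧
      {e : Sym2 V | e ∈ d.edges} ≠ {e : Sym2 V | e ∈ d'.edges} ∧
      ∃ a b : V, G.Adj a b ∧
        s(a, b) ∈ d.edges ∧ s(a, b) ∈ d'.edges ∧
        (∀ e, e ∈ d.edges → e ∈ d'.edges → e = s(a, b)) ∧
        (∀ v, v ∈ d.support → v ∈ d'.support → v = a ∨ v = b) := by
  set c1 := c.rotate _ hx with hc1def
  have hc1 : c1.IsCycle := hc.rotate hx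
  have hmemsup : ∀ z, z ∈ c1.support ↔ z ∈ c.support := mem_support_rotate_iff c hc hx
  have hmemed : ∀ e, e ∈ c1.edges ↔ e ∈ c.edges := mem_edges_rotate_iff c hx
  have hy1 : y ∈ c1.support := (hmemsup y).mpr hy
  obtain ⟨Q1, Q2, hceq, hQ1, hQ2, hQsup, hQed⟩ := cycle_split c1 hc1 hy1 (Ne.symm hxy)
  have hQ1sub : ∀ e ∈ Q1.edges, e ∈ c1.edges := by
    intro e he; rw [hceq, edges_append]; exact List.mem_append_left _ he
  have hQ2sub : ∀ e ∈ Q2.edges, e ∈ c1.edges := by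
    intro e he; rw [hceq, edges_append]; exact List.mem_append_right _ he
  -- first edge of P
  obtain ⟨z0, hadj0, P0, hPeq0⟩ := (Walk.not_nil_iff (p := P)).mp (Walk.not_nil_of_ne hxy)
  have he0P : s(x, z0) ∈ P.edges := by rw [hPeq0, edges_cons]; exact List.mem_cons_self
  have he0c : s(x, z0) ∉ c.edges := hPE _ he0P
  by_cases hxyed : s(x, y) ∈ c1.edges
  · right
    have hadj : G.Adj x y := c1.adj_of_mem_edges hxyed
    have hyxP : s(y, x) ∉ P.edges := by
      rw [Sym2.eq_swap]; exact fun h => hPE _ h ((hmemed _).mp hxyed)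
    refine ⟨x, x, c1, P.append (Walk.cons hadj.symm Walk.nil), hc1,
      cycle_of_path_append_edge hP hadj.symm hyxP, ?_, x, y, hadj, hxyed, ?_, ?_, ?_⟩
    · intro hset
      have h1 : s(x, z0) ∈ {e : Sym2 V | e ∈ (P.append (Walk.cons hadj.symm Walk.nil)).edges} := by
        rw [edges_append]; exact List.mem_append_left _ he0P
      rw [← hset] at h1
      exact he0c ((hmemed _).mp h1)
    · rw [edges_append, edges_cons, edges_nil]
      refine List.mem_append_right _ ?_
      rw [Sym2.eq_swap]
      exact List.mem_singleton_self _
    · intro e h1 h2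
      rw [edges_append, List.mem_append, edges_cons, edges_nil] at h2
      rcases h2 with h2 | h2
      · exact absurd ((hmemed _).mp h1) (hPE _ h2)
      · rw [List.mem_singleton] at h2
        rw [h2, Sym2.eq_swap]
    · intro z h1 h2
      rw [support_append, List.mem_append, support_cons, support_nil, List.tail_cons] at h2
      rcases h2 with h2 | h2
      · exact hPS z h2 ((hmemsup z).mp h1)
      · rw [List.mem_singleton] at h2
        exact Or.inl h2
  · by_cases hadj : G.Adj x y
    · right
      have hyxQ1 : s(y, x) ∉ Q1.edges := by
        rw [Sym2.eq_swap]; exact fun h => hxyed (hQ1sub _ h)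
      have hyxQ2r : s(y, x) ∉ Q2.reverse.edges := by
        rw [Sym2.eq_swap, edges_reverse, List.mem_reverse]
        exact fun h => hxyed (hQ2sub _ ((Sym2.eq_swap (a := x) (b := y)) ▸ h))
      refine ⟨x, x, Q1.append (Walk.cons hadj.symm Walk.nil),
        Q2.reverse.append (Walk.cons hadj.symm Walk.nil),
        cycle_of_path_append_edge hQ1 hadj.symm hyxQ1,
        cycle_of_path_append_edge hQ2.reverse hadj.symm hyxQ2r, ?_, x, y, hadj, ?_, ?_, ?_, ?_⟩
      · -- distinct edge sets via first edge of Q1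
        obtain ⟨z1, hadj1, Q1', hQeq1⟩ := (Walk.not_nil_iff (p := Q1)).mp (Walk.not_nil_of_ne hxy)
        have he1Q1 : s(x, z1) ∈ Q1.edges := by rw [hQeq1, edges_cons]; exact List.mem_cons_self
        intro hset
        have h1 : s(x, z1) ∈ {e : Sym2 V | e ∈ (Q1.append (Walk.cons hadj.symm Walk.nil)).edges} := by
          rw [edges_append]; exact List.mem_append_left _ he1Q1
        rw [hset] at h1
        rw [Set.mem_setOf_eq, edges_append, List.mem_append, edges_cons, edges_nil] at h1
        rcases h1 with h1 | h1
        · rw [edges_reverse, List.mem_reverse] at h1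
          exact hQed _ he1Q1 h1
        · rw [List.mem_singleton] at h1
          exact hxyed (by rw [Sym2.eq_swap, ← h1]; exact hQ1sub _ he1Q1)
      · rw [edges_append, edges_cons, edges_nil]
        refine List.mem_append_right _ ?_
        rw [Sym2.eq_swap]; exact List.mem_singleton_self _
      · rw [edges_append, edges_cons, edges_nil]
        refine List.mem_append_right _ ?_
        rw [Sym2.eq_swap]; exact List.mem_singleton_self _
      · intro e h1 h2
        rw [edges_append, List.mem_append, edges_cons, edges_nil] at h1 h2
        rcases h1 with h1 | h1
        · rcases h2 with h2 | h2
          · rw [edges_reverse, List.mem_reverse] at h2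
            exact absurd h2 (hQed _ h1)
          · rw [List.mem_singleton] at h2; rw [h2, Sym2.eq_swap]
        · rw [List.mem_singleton] at h1; rw [h1, Sym2.eq_swap]
      · intro z h1 h2
        rw [support_append, List.mem_append, support_cons, support_nil, List.tail_cons] at h1 h2
        rcases h1 with h1 | h1
        · rcases h2 with h2 | h2
          · rw [support_reverse, List.mem_reverse] at h2
            exact hQsup z h1 h2
          · rw [List.mem_singleton] at h2; exact Or.inl h2
        · rw [List.mem_singleton] at h1; exact Or.inl h1
    · left
      have hQ1c : ∀ z ∈ Q1.support, z ∈ c.support := by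
        intro z hz
        refine (hmemsup z).mp ?_
        rw [hceq, mem_support_append_iff]; exact Or.inl hz
      have hQ2c : ∀ z ∈ Q2.support, z ∈ c.support := by
        intro z hz
        refine (hmemsup z).mp ?_
        rw [hceq, mem_support_append_iff]; exact Or.inr hz
      exact k23_part c hQ1 hQ2 hP hxy hQsup hQ1c hQ2c hPS hadj

lemma aux {u u' : V} (c : G.Walk u u) (c' : G.Walk u' u')
    (hc : c.IsCycle) (hc' : c'.IsCycle)
    (hNe : ∃ e ∈ c'.edges, e ∉ c.edges)
    (hvert : ∃ v w : V, v ≠ w ∧ v ∈ c.support ∧ v ∈ c'.support ∧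
      w ∈ c.support ∧ w ∈ c'.support) :
    (completeBipartiteGraph (Fin 2) (Fin 3)).IsMinorOf G ∨
    ∃ (x y : V) (d : G.Walk x x) (d' : G.Walk y y),
      d.IsCycle ∧ d'.IsCycle ∧
      {e : Sym2 V | e ∈ d.edges} ≠ {e : Sym2 V | e ∈ d'.edges} ∧
      ∃ a b : V, G.Adj a b ∧
        s(a, b) ∈ d.edges ∧ s(a, b) ∈ d'.edges ∧
        (∀ e, e ∈ d.edges → e ∈ d'.edges → e = s(a, b)) ∧
        (∀ v, v ∈ d.support → v ∈ d'.support → v = a ∨ v = b) := by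
  obtain ⟨v, w, hvw, hvc, hvc', hwc, hwc'⟩ := hvert
  obtain ⟨e, hec', hec⟩ := hNe
  revert hec' hec
  induction e using Sym2.ind with
  | _ p q =>
    intro hec' hec
    have hpq : G.Adj p q := c'.adj_of_mem_edges hec'
    have earpkg : ∃ (x y : V) (P : G.Walk x y), P.IsPath ∧ x ≠ y ∧
        x ∈ c.support ∧ y ∈ c.support ∧
        (∀ z ∈ P.support, z ∈ c.support → z = x ∨ z = y) ∧
        (∀ e' ∈ P.edges, e' ∉ c.edges) := by
      by_cases hpS : p ∈ c.support
      · by_cases hqS : q ∈ c.support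
        · refine ⟨p, q, Walk.cons hpq Walk.nil, ?_, hpq.ne, hpS, hqS, ?_, ?_⟩
          · apply Walk.IsPath.mk'
            simp [hpq.ne]
          · intro z hz _
            simp only [support_cons, support_nil, List.mem_cons,
              List.mem_singleton, List.not_mem_nil, or_false] at hz
            tauto
          · intro e' he' hce
            rw [edges_cons, edges_nil, List.mem_singleton] at he'
            rw [he'] at hce
            exact hec hce
        · exact ear_package c c' hc' hqS (c'.snd_mem_support_of_mem_edges hec')
            hvw hvc hvc' hwc hwc'
      · exact ear_package c c' hc' hpS (c'.fst_mem_support_of_mem_edges hec')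
          hvw hvc hvc' hwc hwc'
    obtain ⟨x, y, P, hP, hxy, hx, hy, hPS, hPE⟩ := earpkg
    exact main_con c hc P hP hxy hx hy hPS hPE

end K23Aux

/-- If a graph contains two cycles with distinct edge sets sharing at least two
vertices, then either it contains a `K_{2,3}` minor, or it contains two cycles with
distinct edge sets whose intersection is exactly one edge together with its two
endpoints. -/
theorem k23_minor_or_cycles_sharing_one_edge {V : Type*} [Fintype V]
    {G : SimpleGraph V} {u u' : V} (c : G.Walk u u) (c' : G.Walk u' u')
    (hc : c.IsCycle) (hc' : c'.IsCycle)
    (hedges : {e : Sym2 V | e ∈ c.edges} ≠ {e : Sym2 V | e ∈ c'.edges})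
    (hvert : ∃ v w : V, v ≠ w ∧ v ∈ c.support ∧ v ∈ c'.support ∧
      w ∈ c.support ∧ w ∈ c'.support) :
    (completeBipartiteGraph (Fin 2) (Fin 3)).IsMinorOf G ∨
    ∃ (x y : V) (d : G.Walk x x) (d' : G.Walk y y),
      d.IsCycle ∧ d'.IsCycle ∧
      {e : Sym2 V | e ∈ d.edges} ≠ {e : Sym2 V | e ∈ d'.edges} ∧
      ∃ a b : V, G.Adj a b ∧
        s(a, b) ∈ d.edges ∧ s(a, b) ∈ d'.edges ∧
        (∀ e, e ∈ d.edges → e ∈ d'.edges → e = s(a, b)) ∧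
        (∀ v, v ∈ d.support → v ∈ d'.support → v = a ∨ v = b) := by
  letI : DecidableEq V := Classical.decEq V
  by_cases h1 : ∃ e ∈ c'.edges, e ∉ c.edges
  · exact K23Aux.aux c c' hc hc' h1 hvert
  · push_neg at h1
    have h2 : ∃ e ∈ c.edges, e ∉ c'.edges := by
      by_contra h2
      push_neg at h2
      apply hedges
      ext e
      simp only [Set.mem_setOf_eq]
      exact ⟨fun h => h2 e h, fun h => h1 e h⟩
    obtain ⟨v, w, hvw, hv, hv', hw, hw'⟩ := hvert
    exact K23Aux.aux c' c hc' hc h2 ⟨v, w, hvw, hv', hv, hw', hw⟩
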